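/- ation: For p, q ∈ [0,1] and η > 0, if kl(p,q) < 9η/2 then |q − ((1−2η)p + 3η)/(1+4η)| ≤ 3·√(p(1−p)η + η²)/(1+4η). -/

import Mathlib

open Real

/-- The Bernoulli Kullback–Leibler divergence `kl : [0,1] × [0,1] → [0,∞]`, with the
conventions `kl(0,q) = −log(1−q)`, `kl(1,q) = −log q`, and the value `∞` when a
logarithm of zero would occur. -/
noncomputable def bernKL (p q : ℝ) : EReal :=
  if p = 0 then (if q = 1 then ⊤ else ((-Real.log (1 - q) : ℝ) : EReal))
  else if p = 1 then (if q = 0 then ⊤ else ((-Real.log q : ℝ) : EReal))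
  else if q = 0 ∨ q = 1 then ⊤
  else ((p * Real.log (p / q) + (1 - p) * Real.log ((1 - p) / (1 - q)) : ℝ) : EReal)


section KLproof
open Filter Topology

noncomputable def klR (p q : ℝ) : ℝ :=
  p * (Real.log p - Real.log q) + (1 - p) * (Real.log (1 - p) - Real.log (1 - q))

noncomputable def gfun (p x : ℝ) : ℝ :=
  klR p x - (x - p) ^ 2 / (2 * ((p + 2 * x) / 3 * (1 - (p + 2 * x) / 3)))

noncomputable def Gd (p q : ℝ) : ℝ :=
  (q - p) * ((q - (p + 2 * q) / 3) ^ 2 *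
      ((1 - q) * (1 - (p + 2 * q) / 3) ^ 2 + q * ((p + 2 * q) / 3) ^ 2) /
    (q * (1 - q) * ((p + 2 * q) / 3 * (1 - (p + 2 * q) / 3)) ^ 2))

set_option maxHeartbeats 1000000 in
lemma hasDerivAt_gfun (p : ℝ) (hp : p ∈ Set.Icc (0:ℝ) 1) {q : ℝ} (hq : q ∈ Set.Ioo (0:ℝ) 1) :
    HasDerivAt (gfun p) (Gd p q) q := by
  obtain ⟨hq0, hq1⟩ := hq
  obtain ⟨hp0, hp1⟩ := hp
  have hq0' : q ≠ 0 := ne_of_gt hq0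
  have hq1' : (1 - q) ≠ 0 := by intro hc; linarith
  have hm0 : (0:ℝ) < (p + 2 * q) / 3 := by linarith
  have hm1 : (p + 2 * q) / 3 < 1 := by linarith
  have hmpos : (0:ℝ) < (p + 2 * q) / 3 * (1 - (p + 2 * q) / 3) := mul_pos hm0 (by linarith)
  have hmne : (p + 2 * q) / 3 * (1 - (p + 2 * q) / 3) ≠ 0 := ne_of_gt hmpos
  have h1 : HasDerivAt (fun x : ℝ => p * (Real.log p - Real.log x)) (p * -q⁻¹) q :=
    (((Real.hasDerivAt_log hq0').const_sub (Real.log p)).const_mul p)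
  have h2a : HasDerivAt (fun x : ℝ => (1:ℝ) - x) (-1) q := (hasDerivAt_id q).const_sub 1
  have h2b : HasDerivAt (fun x : ℝ => Real.log (1 - x)) (-1 / (1 - q)) q := h2a.log hq1'
  have h2 : HasDerivAt (fun x : ℝ => (1 - p) * (Real.log (1 - p) - Real.log (1 - x)))
      ((1 - p) * -(-1 / (1 - q))) q := (h2b.const_sub (Real.log (1 - p))).const_mul (1 - p)
  have hN : HasDerivAt (fun x : ℝ => (x - p) ^ 2) ((2:ℕ) * (q - p) ^ 1 * 1) q :=
    ((hasDerivAt_id q).sub_const p).pow 2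
  have hmd : HasDerivAt (fun x : ℝ => (p + 2 * x) / 3) (2 / 3) q := by
    have : HasDerivAt (fun x : ℝ => (p + 2 * x)) 2 q := by
      simpa using ((hasDerivAt_id q).const_mul 2).const_add p
    simpa using this.div_const 3
  have hD : HasDerivAt (fun x : ℝ => 2 * ((p + 2 * x) / 3 * (1 - (p + 2 * x) / 3)))
      (2 * (2 / 3 * (1 - (p + 2 * q) / 3) + (p + 2 * q) / 3 * -(2 / 3))) q :=
    ((hmd.mul (hmd.const_sub 1)).const_mul 2)
  have hDiv : HasDerivAt (fun x : ℝ => (x - p) ^ 2 / (2 * ((p + 2 * x) / 3 * (1 - (p + 2 * x) / 3))))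
      (((2:ℕ) * (q - p) ^ 1 * 1 * (2 * ((p + 2 * q) / 3 * (1 - (p + 2 * q) / 3))) -
          (q - p) ^ 2 * (2 * (2 / 3 * (1 - (p + 2 * q) / 3) + (p + 2 * q) / 3 * -(2 / 3)))) /
        (2 * ((p + 2 * q) / 3 * (1 - (p + 2 * q) / 3))) ^ 2) q :=
    hN.div hD (by intro hc; apply hmne; linarith)
  have hcomb := ((h1.add h2).sub hDiv)
  convert hcomb using 1
  · rfl
  · rfl
  · rfl
  unfold Gd
  obtain ⟨m, rfl⟩ : ∃ m, p = 3*m - 2*q := ⟨(p+2*q)/3, by ring⟩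
  have hmq : (3*m - 2*q + 2*q)/3 = m := by ring
  rw [hmq]
  have hma : 0 < m := by linarith
  have hmb : m < 1 := by linarith
  have hm0' : m ≠ 0 := ne_of_gt hma
  have hm1' : 1 - m ≠ 0 := by intro hc; linarith
  field_simp
  ring

lemma Gd_nonneg (p c : ℝ) (hp0 : 0 ≤ p) (hpc : p ≤ c) (hc : c ∈ Set.Ioo (0:ℝ) 1) : 0 ≤ Gd p c := by
  obtain ⟨hc0, hc1⟩ := hc
  have hm0 : (0:ℝ) < (p + 2 * c) / 3 := by linarith
  have hm1 : (p + 2 * c) / 3 < 1 := by linarith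
  apply mul_nonneg (by linarith)
  apply div_nonneg
  · apply mul_nonneg (sq_nonneg _)
    have : (0:ℝ) ≤ (1 - c) * (1 - (p + 2 * c) / 3) ^ 2 := mul_nonneg (by linarith) (sq_nonneg _)
    nlinarith [sq_nonneg ((p + 2*c)/3), hc0.le]
  · have := mul_pos (mul_pos hc0 (show (0:ℝ) < 1 - c by linarith))
      (pow_pos (mul_pos hm0 (show (0:ℝ) < 1 - (p + 2*c)/3 by linarith)) 2)
    linarith

lemma Gd_nonpos (p c : ℝ) (hp1 : p ≤ 1) (hpc : c ≤ p) (hc : c ∈ Set.Ioo (0:ℝ) 1) : Gd p c ≤ 0 := by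
  obtain ⟨hc0, hc1⟩ := hc
  have hm0 : (0:ℝ) < (p + 2 * c) / 3 := by linarith
  have hm1 : (p + 2 * c) / 3 < 1 := by linarith
  apply mul_nonpos_of_nonpos_of_nonneg (by linarith)
  apply div_nonneg
  · apply mul_nonneg (sq_nonneg _)
    have : (0:ℝ) ≤ (1 - c) * (1 - (p + 2 * c) / 3) ^ 2 := mul_nonneg (by linarith) (sq_nonneg _)
    nlinarith [sq_nonneg ((p + 2*c)/3), hc0.le]
  · have := mul_pos (mul_pos hc0 (show (0:ℝ) < 1 - c by linarith))
      (pow_pos (mul_pos hm0 (show (0:ℝ) < 1 - (p + 2*c)/3 by linarith)) 2)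
    linarith

lemma gfun_mono (p : ℝ) (hp : p ∈ Set.Icc (0:ℝ) 1) {a b : ℝ} (hab : a < b) (hpa : p ≤ a)
    (ha : a ∈ Set.Ioo (0:ℝ) 1) (hb : b ∈ Set.Ioo (0:ℝ) 1) : gfun p a ≤ gfun p b := by
  have hsub : Set.Icc a b ⊆ Set.Ioo (0:ℝ) 1 := fun x hx => ⟨lt_of_lt_of_le ha.1 hx.1, lt_of_le_of_lt hx.2 hb.2⟩
  have hcont : ContinuousOn (gfun p) (Set.Icc a b) := fun x hx =>
    (hasDerivAt_gfun p hp (hsub hx)).continuousAt.continuousWithinAt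
  have hder : ∀ x ∈ Set.Ioo a b, HasDerivAt (gfun p) (Gd p x) x := fun x hx =>
    hasDerivAt_gfun p hp (hsub ⟨hx.1.le, hx.2.le⟩)
  obtain ⟨c, hc, hceq⟩ := exists_hasDerivAt_eq_slope (gfun p) (Gd p) hab hcont hder
  have hGd : 0 ≤ Gd p c := Gd_nonneg p c hp.1 (hpa.trans hc.1.le) (hsub ⟨hc.1.le, hc.2.le⟩)
  have hba : 0 < b - a := by linarith
  rw [eq_div_iff (ne_of_gt hba)] at hceq
  nlinarith [mul_nonneg hGd hba.le]

lemma gfun_anti (p : ℝ) (hp : p ∈ Set.Icc (0:ℝ) 1) {a b : ℝ} (hab : a < b) (hbp : b ≤ p)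
    (ha : a ∈ Set.Ioo (0:ℝ) 1) (hb : b ∈ Set.Ioo (0:ℝ) 1) : gfun p b ≤ gfun p a := by
  have hsub : Set.Icc a b ⊆ Set.Ioo (0:ℝ) 1 := fun x hx => ⟨lt_of_lt_of_le ha.1 hx.1, lt_of_le_of_lt hx.2 hb.2⟩
  have hcont : ContinuousOn (gfun p) (Set.Icc a b) := fun x hx =>
    (hasDerivAt_gfun p hp (hsub hx)).continuousAt.continuousWithinAt
  have hder : ∀ x ∈ Set.Ioo a b, HasDerivAt (gfun p) (Gd p x) x := fun x hx =>
    hasDerivAt_gfun p hp (hsub ⟨hx.1.le, hx.2.le⟩)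
  obtain ⟨c, hc, hceq⟩ := exists_hasDerivAt_eq_slope (gfun p) (Gd p) hab hcont hder
  have hGd : Gd p c ≤ 0 := Gd_nonpos p c hp.2 (hc.2.le.trans hbp) (hsub ⟨hc.1.le, hc.2.le⟩)
  have hba : 0 < b - a := by linarith
  rw [eq_div_iff (ne_of_gt hba)] at hceq
  nlinarith [mul_nonpos_of_nonpos_of_nonneg hGd hba.le]

lemma gfun_self (p : ℝ) : gfun p p = 0 := by simp [gfun, klR]

lemma gfun_one (q : ℝ) : gfun 1 q = gfun 0 (1 - q) := by
  unfold gfun klR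
  simp only [sub_sub_cancel, sub_self, sub_zero, zero_mul, one_mul]
  ring

lemma gfun_zero_tendsto : Tendsto (gfun 0) (𝓝[>](0:ℝ)) (𝓝 0) := by
  have c1 : ContinuousAt (fun t : ℝ => -Real.log (1-t) - 9*t/(4*(3-2*t))) 0 := by
    apply ContinuousAt.sub
    · exact ((continuousAt_const.sub continuousAt_id).log (by norm_num)).neg
    · exact (continuousAt_const.mul continuousAt_id).div
        (continuousAt_const.mul (continuousAt_const.sub (continuousAt_const.mul continuousAt_id)))
        (by norm_num)
  have h0 : (fun t : ℝ => -Real.log (1-t) - 9*t/(4*(3-2*t))) 0 = 0 := by norm_num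
  have htend : Tendsto (fun t : ℝ => -Real.log (1-t) - 9*t/(4*(3-2*t))) (𝓝[>](0:ℝ)) (𝓝 0) := by
    have h := c1.continuousWithinAt (s := Set.Ioi (0:ℝ))
    rw [ContinuousWithinAt] at h
    convert h using 2
    norm_num
  apply htend.congr'
  filter_upwards [Ioo_mem_nhdsGT_of_mem (Set.mem_Ico.mpr ⟨le_refl 0, one_pos⟩)] with t ht
  obtain ⟨ht0, ht1⟩ := ht
  unfold gfun klR
  have h1 : (1:ℝ) - t ≠ 0 := by intro hc; linarith
  have h2 : (3:ℝ) - 2*t ≠ 0 := by intro hc; linarith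
  have ht0' : t ≠ 0 := ne_of_gt ht0
  simp only [Real.log_one, zero_mul, sub_zero, zero_add, one_mul, zero_sub]
  field_simp
  ring

lemma gfun_nonneg (p : ℝ) (hp : p ∈ Set.Icc (0:ℝ) 1) {q : ℝ} (hq : q ∈ Set.Ioo (0:ℝ) 1) :
    0 ≤ gfun p q := by
  obtain ⟨hq0, hq1⟩ := hq
  have h0case : ∀ x : ℝ, x ∈ Set.Ioo (0:ℝ) 1 → 0 ≤ gfun 0 x := by
    intro x hx
    refine le_of_tendsto gfun_zero_tendsto ?_
    filter_upwards [Ioo_mem_nhdsGT_of_mem (Set.mem_Ico.mpr ⟨le_refl 0, hx.1⟩)] with t ht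
    exact gfun_mono 0 (by constructor <;> norm_num) ht.2 ht.1.le ⟨ht.1, ht.2.trans hx.2⟩ hx
  rcases eq_or_lt_of_le hp.1 with hp0 | hp0
  · exact h0case q ⟨hq0, hq1⟩ |>.trans_eq (by rw [← hp0])
  rcases eq_or_lt_of_le hp.2 with hp1 | hp1
  · rw [hp1, gfun_one]
    exact h0case (1 - q) ⟨by linarith, by linarith⟩
  -- p ∈ Ioo 0 1
  rcases lt_trichotomy q p with hlt | heq | hgt
  · have := gfun_anti p hp hlt (le_refl p) ⟨hq0, hq1⟩ ⟨hp0, hp1⟩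
    rwa [gfun_self] at this
  · rw [heq, gfun_self]
  · have := gfun_mono p hp hgt (le_refl p) ⟨hp0, hp1⟩ ⟨hq0, hq1⟩
    rwa [gfun_self] at this

lemma klR_key (p : ℝ) (hp : p ∈ Set.Icc (0:ℝ) 1) {q : ℝ} (hq : q ∈ Set.Ioo (0:ℝ) 1) :
    (q - p) ^ 2 ≤ 2 * klR p q * ((p + 2 * q) / 3 * (1 - (p + 2 * q) / 3)) := by
  have hg := gfun_nonneg p hp hq
  unfold gfun at hg
  have hm : (0:ℝ) < (p + 2 * q) / 3 * (1 - (p + 2 * q) / 3) := by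
    apply mul_pos
    · have := hp.1; have := hq.1; linarith
    · have := hp.2; have := hq.2; linarith
  rw [sub_nonneg, div_le_iff₀ (by linarith)] at hg
  nlinarith [hg]

lemma bernKL_eq_klR (p : ℝ) (hp : p ∈ Set.Icc (0:ℝ) 1) {q : ℝ} (hq : q ∈ Set.Ioo (0:ℝ) 1) :
    bernKL p q = ((klR p q : ℝ) : EReal) := by
  obtain ⟨hq0, hq1⟩ := hq
  have hq0' : q ≠ 0 := ne_of_gt hq0
  have hq1' : q ≠ 1 := ne_of_lt hq1
  have h1q : (1:ℝ) - q ≠ 0 := by intro hc; linarith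
  unfold bernKL
  rcases eq_or_ne p 0 with rfl | hp0
  · simp [klR, hq1', Real.log_one]
  rcases eq_or_ne p 1 with rfl | hp1
  · simp [klR, hq0', Real.log_one]
  have h1p : (1:ℝ) - p ≠ 0 := by intro hc; apply hp1; linarith
  rw [if_neg hp0, if_neg hp1, if_neg (by push_neg; exact ⟨hq0', hq1'⟩)]
  rw [Real.log_div hp0 hq0', Real.log_div h1p h1q]
  rfl


end KLproof

/-- If `kl(p,q) < 9η/2` then `|q − ((1−2η)p + 3η)/(1+4η)| ≤ 3√(p(1−p)η + η²)/(1+4η)`. -/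
theorem bernKL_q_localization (p q η : ℝ) (hp : p ∈ Set.Icc (0:ℝ) 1)
    (hq : q ∈ Set.Icc (0:ℝ) 1) (hη : 0 < η)
    (h : bernKL p q < ((9 * η / 2 : ℝ) : EReal)) :
    |q - ((1 - 2 * η) * p + 3 * η) / (1 + 4 * η)| ≤
      3 * Real.sqrt (p * (1 - p) * η + η ^ 2) / (1 + 4 * η) := by
  have h4 : (0:ℝ) < 1 + 4 * η := by linarith
  have hpp : 0 ≤ p * (1 - p) := mul_nonneg hp.1 (by linarith [hp.2])
  have hsq : Real.sqrt (p * (1 - p) * η + η ^ 2) ^ 2 = p * (1 - p) * η + η ^ 2 :=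
    Real.sq_sqrt (by positivity)
  have hs0 : 0 ≤ Real.sqrt (p * (1 - p) * η + η ^ 2) := Real.sqrt_nonneg _
  set s := Real.sqrt (p * (1 - p) * η + η ^ 2) with hs
  -- reduce to the key quadratic bound
  have main : ∀ hx2 : (q - p) ^ 2 ≤ 9 * η * ((p + 2 * q) / 3 * (1 - (p + 2 * q) / 3)),
      |q - ((1 - 2 * η) * p + 3 * η) / (1 + 4 * η)| ≤ 3 * s / (1 + 4 * η) := by
    intro hx2
    have hrw : q - ((1 - 2 * η) * p + 3 * η) / (1 + 4 * η)
        = (q * (1 + 4 * η) - ((1 - 2 * η) * p + 3 * η)) / (1 + 4 * η) := by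
      field_simp
    rw [hrw, abs_div, abs_of_pos h4, div_le_div_iff_of_pos_right h4]
    have hA2 : (q * (1 + 4 * η) - ((1 - 2 * η) * p + 3 * η)) ^ 2 ≤ (3 * s) ^ 2 := by
      nlinarith [mul_le_mul_of_nonneg_left hx2 h4.le, hsq]
    rw [← Real.sqrt_sq_eq_abs]
    refine le_trans (Real.sqrt_le_sqrt hA2) ?_
    rw [Real.sqrt_sq (by positivity)]
  rcases eq_or_lt_of_le hq.1 with hq0 | hq0
  · -- q = 0
    have hq0 : q = 0 := hq0.symm
    subst hq0
    rcases eq_or_ne p 0 with rfl | hp0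
    · apply main; nlinarith
    · exfalso
      unfold bernKL at h
      rcases eq_or_ne p 1 with rfl | hp1
      · simp [hp0] at h
      · simp [hp0, hp1] at h
  rcases eq_or_lt_of_le hq.2 with hq1 | hq1
  · -- q = 1
    subst hq1
    rcases eq_or_ne p 1 with rfl | hp1
    · apply main; nlinarith
    · exfalso
      unfold bernKL at h
      rcases eq_or_ne p 0 with rfl | hp0
      · simp at h
      · simp [hp0, hp1] at h
  -- q ∈ (0,1)
  have hqIoo : q ∈ Set.Ioo (0:ℝ) 1 := ⟨hq0, hq1⟩
  rw [bernKL_eq_klR p hp hqIoo, EReal.coe_lt_coe_iff] at h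
  have hkey := klR_key p hp hqIoo
  apply main
  have hm : (0:ℝ) ≤ (p + 2 * q) / 3 * (1 - (p + 2 * q) / 3) := by
    apply mul_nonneg
    · have := hp.1; linarith [hq0.le]
    · have := hp.2; linarith [hq1.le]
  nlinarith [hkey, mul_le_mul_of_nonneg_right h.le hm]
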